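/- Let G=(V,E) be a graph and H=(V,E') a subgraph with E'⊆E such that H is a disjoint union of components, each of which is an induced subgraph of G. Then for every positive definite matrix A with a_{ij}=0 whenever (i,j)∉E (i≠j), the thresholded matrix A_H is positive definite. -/

import Mathlib

def threshold {n : ℕ} (G : SimpleGraph (Fin n)) [DecidableRel G.Adj]
    (A : Matrix (Fin n) (Fin n) ℝ) : Matrix (Fin n) (Fin n) ℝ :=
  Matrix.of fun i j => if i = j ∨ G.Adj i j then A i j else 0

/-- If `H ≤ G` and every connected component of `H` is an induced subgraph of `G`
(i.e. vertices joined in `H`-reachability that are adjacent in `G` are adjacent in `H`),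
then thresholding with respect to `H` preserves positive definiteness of every
positive definite matrix with zeros at the non-edges of `G`. -/
theorem stmt_7 {n : ℕ} (G H : SimpleGraph (Fin n)) [DecidableRel G.Adj]
    [DecidableRel H.Adj] (hsub : H ≤ G)
    (hind : ∀ i j : Fin n, H.Reachable i j → G.Adj i j → H.Adj i j)
    (A : Matrix (Fin n) (Fin n) ℝ) (hA : A.PosDef)
    (hzeros : ∀ i j : Fin n, i ≠ j → ¬ G.Adj i j → A i j = 0) :
    (threshold H A).PosDef := by
  classical
  set B := threshold H A with hB
  -- key pointwise description of B
  have key : ∀ i j, B i j = if H.Reachable i j then A i j else 0 := by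
    intro i j
    simp only [hB, threshold, Matrix.of_apply]
    by_cases hij : i = j
    · subst hij; simp [SimpleGraph.Reachable.refl]
    by_cases hadj : H.Adj i j
    · simp [hadj, hadj.reachable]
    · simp only [hij, hadj, or_self, if_false]
      by_cases hreach : H.Reachable i j
      · rw [if_pos hreach]
        by_cases hG : G.Adj i j
        · exact absurd (hind i j hreach hG) hadj
        · exact (hzeros i j hij hG).symm
      · rw [if_neg hreach]
  rw [Matrix.posDef_iff_dotProduct_mulVec] at hA ⊢
  constructor
  · -- Hermitian
    ext i j
    simp only [Matrix.conjTranspose_apply, star_trivial, key]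
    by_cases hreach : H.Reachable j i
    · rw [if_pos hreach, if_pos hreach.symm]
      have := hA.1
      calc A j i = A.conjTranspose i j := rfl
        _ = A i j := by rw [this]
    · rw [if_neg hreach, if_neg fun h => hreach h.symm]
  · intro x hx
    -- component-restricted vectors
    set y : H.ConnectedComponent → Fin n → ℝ :=
      fun c i => if H.connectedComponentMk i = c then x i else 0 with hy
    have pointwise : ∀ i j, x i * (B i j * x j) = ∑ c, y c i * (A i j * y c j) := by
      intro i j
      rw [key]
      by_cases hreach : H.Reachable i j
      · rw [if_pos hreach]
        have hcomp : H.connectedComponentMk i = H.connectedComponentMk j :=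
          SimpleGraph.ConnectedComponent.sound hreach
        rw [Fintype.sum_eq_single (H.connectedComponentMk i)
          (fun c hc => by simp [hy, hc, Ne.symm hc])]
        simp [hy, hcomp]
      · rw [if_neg hreach]
        have : ∀ c, y c i * (A i j * y c j) = 0 := by
          intro c
          by_cases hci : H.connectedComponentMk i = c
          · have hcj : H.connectedComponentMk j ≠ c := by
              intro hcj
              exact hreach (SimpleGraph.ConnectedComponent.exact (hci.trans hcj.symm))
            simp [hy, hcj]
          · simp [hy, hci]
        simp [this]
    have expand : ∀ (v : Fin n → ℝ) (M : Matrix (Fin n) (Fin n) ℝ),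
        dotProduct (star v) (M.mulVec v) = ∑ i, ∑ j, v i * (M i j * v j) := by
      intro v M
      simp [dotProduct, Matrix.mulVec, Finset.mul_sum]
    have total : dotProduct (star x) (B.mulVec x)
        = ∑ c, dotProduct (star (y c)) (A.mulVec (y c)) := by
      rw [expand]
      simp_rw [pointwise, expand]
      have h1 : ∀ i : Fin n, (∑ j, ∑ c, y c i * (A i j * y c j))
          = ∑ c, ∑ j, y c i * (A i j * y c j) := fun i => Finset.sum_comm
      simp_rw [h1]
      exact Finset.sum_comm
    rw [total]
    -- positivity
    obtain ⟨i0, hi0⟩ := Function.ne_iff.mp hx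
    have hy0 : y (H.connectedComponentMk i0) ≠ 0 := by
      intro h
      apply hi0
      have := congrFun h i0
      simpa [hy] using this
    refine Finset.sum_pos' (fun c _ => ?_) ⟨H.connectedComponentMk i0, Finset.mem_univ _, ?_⟩
    · by_cases h : y c = 0
      · simp [h]
      · exact le_of_lt (hA.2 (x := y c) h)
    · exact hA.2 hy0
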